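/- Let s be Sylvester's sequence. In ℝ^{n+1}, the simplex P_1^{(n+1)} = Conv(e_0, …, e_n, w_1) with w_1 = (2·w_2, -1) and w_2 ∈ ℤ^n the vector with coordinates -(s_n-1)/s_i, equals Conv((P_2 × {0}) ∪ {e_n, w_1}), where P_2 = Conv(e_0, …, e_{n-1}, w_2) ⊆ ℝ^n. -/

import Mathlib

theorem P1_eq_conv_P2_en_w1 (s : ℕ → ℕ) (h0 : s 0 = 2)
    (hrec : ∀ k, s (k + 1) = s k ^ 2 - s k + 1) (n : ℕ) (hn : 1 ≤ n) :
    ∀ w2 : Fin n → ℝ,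
      (w2 = fun i : Fin n => -(((s n : ℝ) - 1) / (s (i : ℕ) : ℝ))) →
    ∀ w1 en : Fin (n + 1) → ℝ,
      (w1 = fun i : Fin (n + 1) => if h : (i : ℕ) < n then 2 * w2 ⟨i, h⟩ else -1) →
      (en = fun i : Fin (n + 1) => if i = Fin.last n then 1 else 0) →
      convexHull ℝ (Set.range (fun k : Fin (n + 2) =>
        if (k : ℕ) < n + 1 then
          (fun i : Fin (n + 1) => if (i : ℕ) = (k : ℕ) then (1 : ℝ) else 0)
        else w1)) =
      convexHull ℝ
        (((fun x : Fin n → ℝ => fun i : Fin (n + 1) =>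
            if h : (i : ℕ) < n then x ⟨i, h⟩ else 0) ''
          convexHull ℝ (Set.range (fun k : Fin (n + 1) =>
            if (k : ℕ) < n then
              (fun i : Fin n => if (i : ℕ) = (k : ℕ) then (1 : ℝ) else 0)
            else w2))) ∪ {en, w1}) := by
  intro w2 hw2 w1 en hw1 hen
  -- the embedding map is linear
  set f : (Fin n → ℝ) → (Fin (n + 1) → ℝ) :=
    fun x : Fin n → ℝ => fun i : Fin (n + 1) =>
      if h : (i : ℕ) < n then x ⟨i, h⟩ else 0 with hf
  have hlin : IsLinearMap ℝ f := by
    constructor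
    · intro x y; funext i
      by_cases h : (i : ℕ) < n <;> simp [hf, h]
    · intro c x; funext i
      by_cases h : (i : ℕ) < n <;> simp [hf, h]
  set g : Fin (n + 2) → (Fin (n + 1) → ℝ) :=
    fun k => if (k : ℕ) < n + 1 then
      (fun i : Fin (n + 1) => if (i : ℕ) = (k : ℕ) then (1 : ℝ) else 0) else w1 with hg
  set p : Fin (n + 1) → (Fin n → ℝ) :=
    fun k => if (k : ℕ) < n then
      (fun i : Fin n => if (i : ℕ) = (k : ℕ) then (1 : ℝ) else 0) else w2 with hp
  rw [hlin.image_convexHull, convexHull_convexHull_union_left]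
  -- key point: w2 embedded equals the midpoint of w1 and en
  have hmid : f w2 = (1/2 : ℝ) • w1 + (1/2 : ℝ) • en := by
    funext i
    by_cases h : (i : ℕ) < n
    · have : i ≠ Fin.last n := by
        intro heq; rw [heq] at h; simp [Fin.last] at h
      simp [hf, hw1, hen, h, this]
    · have hi : i = Fin.last n := by
        apply Fin.ext; simp [Fin.last]; omega
      simp [hf, hw1, hen, h, hi]
  have hen_g : en = g ⟨n, by omega⟩ := by
    funext i
    simp [hg, hen, Fin.last, Fin.ext_iff]
  have hw1_g : w1 = g ⟨n + 1, by omega⟩ := by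
    simp [hg]
  apply Set.Subset.antisymm
  · apply convexHull_min _ (convex_convexHull ℝ _)
    rintro x ⟨k, rfl⟩
    apply subset_convexHull
    by_cases hk : (k : ℕ) < n
    · left
      refine ⟨p ⟨k, by omega⟩, ⟨⟨k, by omega⟩, rfl⟩, ?_⟩
      funext i
      simp only [hg, hp, hf]
      rw [if_pos (by first | omega | (simp <;> omega)), if_pos (by first | omega | (simp <;> omega))]
      by_cases h : (i : ℕ) < n
      · simp [h]
      · rw [dif_neg h, if_neg (by omega)]
    · by_cases hk' : (k : ℕ) < n + 1
      · right; left
        have hkn : (k : ℕ) = n := by omega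
        rw [hen_g]
        simp only [hg]
        rw [if_pos (by first | omega | (simp <;> omega)), if_pos (by first | omega | (simp <;> omega))]
        simp [hkn]
      · right; right
        simp [hg, if_neg hk', show ¬ (k : ℕ) ≤ n by omega]
  · apply convexHull_min _ (convex_convexHull ℝ _)
    rintro x (⟨y, ⟨k, rfl⟩, rfl⟩ | hx)
    · by_cases hk : (k : ℕ) < n
      · apply subset_convexHull
        refine ⟨⟨k, by omega⟩, ?_⟩
        simp only [hg, hp, hf]
        rw [if_pos (by first | omega | (simp <;> omega)), if_pos (by first | omega | (simp <;> omega))]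
        funext i
        by_cases h : (i : ℕ) < n
        · simp [h]
        · rw [dif_neg h, if_neg (by omega)]
      · have : p k = w2 := by simp [hp, hk]
        rw [this, hmid]
        have h1 : w1 ∈ convexHull ℝ (Set.range g) :=
          subset_convexHull ℝ _ ⟨_, hw1_g.symm⟩
        have h2 : en ∈ convexHull ℝ (Set.range g) :=
          subset_convexHull ℝ _ ⟨_, hen_g.symm⟩
        exact (convex_convexHull ℝ _) h1 h2 (by norm_num) (by norm_num) (by norm_num)
    · apply subset_convexHull
      rcases hx with rfl | rfl
      · exact ⟨_, hen_g.symm⟩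
      · exact ⟨_, hw1_g.symm⟩
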